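/- For any n-ary connectives C₁ and C₂ given by partition sets P₁ and P₂ of {1,…,n}, the main cut-elimination step holds for every cut between the conclusion of any introduction rule for C₁ (applied to A₁,…,Aₙ) and the conclusion of any introduction rule for C₂ (applied to ~A₁,…,~Aₙ) — that is, for all p ∈ P₁ and q ∈ P₂ such a cut can always be replaced by cuts on the pairs A_i, ~A_i yielding a derivation of the same end-sequent from the same premises — if and only if the partition sets P₁ and P₂ are orthogonal. -/

import Mathlib

/-! ## Partitions of `{1,…,n}`, meeting graphs, orthogonality (Danos–Regnier) -/

/-- A partition of `{1,…,n}`, represented as a `Finpartition` of `Fin n`. -/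
abbrev NPartition (n : ℕ) := Finpartition (Finset.univ : Finset (Fin n))

/-- The (simple graph underlying the) meeting graph `G(p,q)` of two partitions of `{1,…,n}`:
its vertices are the classes of `p` together with the classes of `q`, and a class of `p` is
adjacent to a class of `q` iff some `i ∈ {1,…,n}` belongs to both (in the meeting multigraph
there is one edge for each such `i`). -/
def meetingGraph {n : ℕ} (p q : NPartition n) :
    SimpleGraph ({c // c ∈ p.parts} ⊕ {d // d ∈ q.parts}) :=
  SimpleGraph.fromRel fun a b =>
    ∃ (c : {c // c ∈ p.parts}) (d : {d // d ∈ q.parts}),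
      ((c : Finset (Fin n)) ∩ (d : Finset (Fin n))).Nonempty ∧
      a = Sum.inl c ∧ b = Sum.inr d

/-- `p ⊥ q` : the meeting multigraph `G(p,q)` is connected and acyclic.  The meeting
multigraph has exactly `n` edges (one per element of `{1,…,n}`), and a connected multigraph
is acyclic iff its number of edges is exactly one less than its number of vertices; so
`G(p,q)` is connected and acyclic iff it is connected (equivalently, the underlying simple
graph is connected) and `n + 1 = (#classes of p) + (#classes of q)`. -/
def Finpartition.Orthogonal {n : ℕ} (p q : NPartition n) : Prop :=
  (meetingGraph p q).Connected ∧ n + 1 = p.parts.card + q.parts.card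

/-- Orthogonality of two partition sets: `P ⊥ Q` iff `p ⊥ q` for all `p ∈ P`, `q ∈ Q`. -/
def orthSet {n : ℕ} (P Q : Set (NPartition n)) : Prop :=
  ∀ p ∈ P, ∀ q ∈ Q, p.Orthogonal q

/-- `P^⊥`, the maximal partition set orthogonal to `P`. -/
def orthCompl {n : ℕ} (P : Set (NPartition n)) : Set (NPartition n) :=
  {q | ∀ p ∈ P, p.Orthogonal q}

/-- The partition set of `⊗ⁿ` : the single partition of `{1,…,n}` into singleton classes. -/
def IsTensorSet {n : ℕ} (R : Set (NPartition n)) : Prop :=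
  R = {p : NPartition n | ∀ c ∈ p.parts, c.card = 1}

/-- The partition set of `⅋ⁿ` : the single partition of `{1,…,n}` with one class. -/
def IsParSet {n : ℕ} (R : Set (NPartition n)) : Prop :=
  R = {p : NPartition n | p.parts = {Finset.univ}}

/-! ## Generalized multiplicative connectives and the sequent calculus `MLL(Cᵢ)` -/

/-- An `n`-ary generalized (multiplicative) connective `C` together with its dual `C*`:
a pair of nonempty finite partition sets of `{1,…,n}` with `(P_C)^⊥ = P_{C*}` and
`(P_{C*})^⊥ = P_C`.  `rules` is the partition set of the introduction (right) rules of
`C`, and `dualRules` the one of its dual `C*`. -/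
structure GenConn : Type where
  arity : ℕ
  rules : Set (NPartition arity)
  dualRules : Set (NPartition arity)
  rules_nonempty : rules.Nonempty
  rules_finite : rules.Finite
  dualRules_nonempty : dualRules.Nonempty
  dualRules_finite : dualRules.Finite
  orth : orthCompl rules = dualRules
  orth' : orthCompl dualRules = rules

/-- Formulas of `MLL(Cᵢ)`: built from atoms `P` and their duals `~P` by `⊗`, `⅋` and the
generalized connectives `Cᵢ` (with constructor `conn i`) and their duals `Cᵢ*` (with
constructor `dconn i`), where `i` ranges over a signature `I` and `Csig i` records the
arity and the partition sets of `Cᵢ`. -/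
inductive Formula (I : Type) (Csig : I → GenConn) : Type
  | pos : ℕ → Formula I Csig
  | neg : ℕ → Formula I Csig
  | tens : Formula I Csig → Formula I Csig → Formula I Csig
  | parr : Formula I Csig → Formula I Csig → Formula I Csig
  | conn : (i : I) → (Fin (Csig i).arity → Formula I Csig) → Formula I Csig
  | dconn : (i : I) → (Fin (Csig i).arity → Formula I Csig) → Formula I Csig

/-- The dual `~A` of a formula, extended by De Morgan and
`~(Cᵢ(A₁,…,Aₘ)) = Cᵢ*(~A₁,…,~Aₘ)`. -/
def Formula.dual {I : Type} {Csig : I → GenConn} : Formula I Csig → Formula I Csig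
  | .pos m => .neg m
  | .neg m => .pos m
  | .tens A B => .parr A.dual B.dual
  | .parr A B => .tens A.dual B.dual
  | .conn i A => .dconn i fun k => (A k).dual
  | .dconn i A => .conn i fun k => (A k).dual

/-- Provability in the one-sided sequent calculus `MLL(Cᵢ)` (sequents are multisets of
formulas).  The rules are the axiom `⊢ P, ~P` for atomic `P`, the cut rule (allowed only
when `cutEnabled = true`), the `⊗`- and `⅋`-rules of MLL, and, for each generalized
connective `Cᵢ` and each partition `p ∈ P_{Cᵢ}` with classes `c`, the introduction rule
with premises `⊢ Γ_c, A_{c₁},…,A_{cₘ}` (one for each class `c` of `p`) and conclusion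
`⊢ Γ₁,…,Γ_k, Cᵢ(A₁,…,Aₘ)`; dually for `Cᵢ*` using `p ∈ P_{Cᵢ*}`. -/
inductive Provable {I : Type} {Csig : I → GenConn} (cutEnabled : Bool) :
    Multiset (Formula I Csig) → Prop
  | ax (m : ℕ) : Provable cutEnabled {Formula.pos m, Formula.neg m}
  | cut (A : Formula I Csig) (Γ Δ : Multiset (Formula I Csig)) (hcut : cutEnabled = true) :
      Provable cutEnabled (A ::ₘ Γ) → Provable cutEnabled (A.dual ::ₘ Δ) →
      Provable cutEnabled (Γ + Δ)
  | tens (A B : Formula I Csig) (Γ Δ : Multiset (Formula I Csig)) :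
      Provable cutEnabled (A ::ₘ Γ) → Provable cutEnabled (B ::ₘ Δ) →
      Provable cutEnabled (Formula.tens A B ::ₘ (Γ + Δ))
  | parr (A B : Formula I Csig) (Γ : Multiset (Formula I Csig)) :
      Provable cutEnabled (A ::ₘ B ::ₘ Γ) →
      Provable cutEnabled (Formula.parr A B ::ₘ Γ)
  | conn (i : I) (A : Fin (Csig i).arity → Formula I Csig)
      (p : NPartition (Csig i).arity) (hp : p ∈ (Csig i).rules)
      (Γ : {c // c ∈ p.parts} → Multiset (Formula I Csig)) :
      (∀ c : {c // c ∈ p.parts},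
        Provable cutEnabled (Γ c + Multiset.map A (c : Finset (Fin (Csig i).arity)).val)) →
      Provable cutEnabled (Formula.conn i A ::ₘ ∑ c : {c // c ∈ p.parts}, Γ c)
  | dconn (i : I) (A : Fin (Csig i).arity → Formula I Csig)
      (p : NPartition (Csig i).arity) (hp : p ∈ (Csig i).dualRules)
      (Γ : {c // c ∈ p.parts} → Multiset (Formula I Csig)) :
      (∀ c : {c // c ∈ p.parts},
        Provable cutEnabled (Γ c + Multiset.map A (c : Finset (Fin (Csig i).arity)).val)) →
      Provable cutEnabled (Formula.dconn i A ::ₘ ∑ c : {c // c ∈ p.parts}, Γ c)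

/-- Derivations from a set `hyps` of hypothesis sequents using only instances of the cut
rule whose cut formula belongs to `cutFmls`: from `⊢ A, Γ` and `⊢ ~A, Δ` (with
`A ∈ cutFmls`) infer `⊢ Γ, Δ`. -/
inductive CutDeriv {F : Type} (dual : F → F) (cutFmls : Set F)
    (hyps : Set (Multiset F)) : Multiset F → Prop
  | hyp (Γ : Multiset F) : Γ ∈ hyps → CutDeriv dual cutFmls hyps Γ
  | cut (A : F) (Γ Δ : Multiset F) : A ∈ cutFmls →
      CutDeriv dual cutFmls hyps (A ::ₘ Γ) →
      CutDeriv dual cutFmls hyps (dual A ::ₘ Δ) →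
      CutDeriv dual cutFmls hyps (Γ + Δ)

namespace DR

variable {n : ℕ} {p q : NPartition n}

/-- The `p`-class containing `i`, as a vertex. -/
def pc (p : NPartition n) (i : Fin n) : {c // c ∈ p.parts} :=
  ⟨p.part i, p.part_mem.2 (Finset.mem_univ i)⟩

def qc (q : NPartition n) (i : Fin n) : {d // d ∈ q.parts} :=
  ⟨q.part i, q.part_mem.2 (Finset.mem_univ i)⟩

lemma mem_pc (i : Fin n) : i ∈ (pc p i : Finset (Fin n)) := p.mem_part (Finset.mem_univ i)
lemma mem_qc (i : Fin n) : i ∈ (qc q i : Finset (Fin n)) := q.mem_part (Finset.mem_univ i)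

lemma pc_eq {i : Fin n} {c : {c // c ∈ p.parts}} (h : i ∈ (c : Finset (Fin n))) :
    pc p i = c := Subtype.ext (p.part_eq_of_mem c.2 h)

lemma qc_eq {i : Fin n} {d : {d // d ∈ q.parts}} (h : i ∈ (d : Finset (Fin n))) :
    qc q i = d := Subtype.ext (q.part_eq_of_mem d.2 h)

lemma mem_iff_pc {i : Fin n} {c : {c // c ∈ p.parts}} :
    i ∈ (c : Finset (Fin n)) ↔ pc p i = c :=
  ⟨pc_eq, fun h => h ▸ mem_pc i⟩

lemma mem_iff_qc {i : Fin n} {d : {d // d ∈ q.parts}} :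
    i ∈ (d : Finset (Fin n)) ↔ qc q i = d :=
  ⟨qc_eq, fun h => h ▸ mem_qc i⟩

lemma adj_pc_qc (i : Fin n) : (meetingGraph p q).Adj (Sum.inl (pc p i)) (Sum.inr (qc q i)) := by
  rw [meetingGraph, SimpleGraph.fromRel_adj]
  exact ⟨by simp, Or.inl ⟨pc p i, qc q i, ⟨i, Finset.mem_inter.2 ⟨mem_pc i, mem_qc i⟩⟩, rfl, rfl⟩⟩

section Glue

variable {F : Type} (dual : F → F) (A : Fin n → F)
  (Γ : {c // c ∈ p.parts} → Multiset F) (Δ : {d // d ∈ q.parts} → Multiset F)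

local notation "V" => ({c // c ∈ p.parts} ⊕ {d // d ∈ q.parts})

def base : V → Multiset F := Sum.elim Γ Δ

def hypf : V → Multiset F :=
  Sum.elim (fun c => Γ c + Multiset.map A (c : Finset (Fin n)).val)
    (fun d => Δ d + Multiset.map (fun i => dual (A i)) (d : Finset (Fin n)).val)

def hypSet : Set (Multiset F) :=
  (Set.range fun c : {c // c ∈ p.parts} =>
      Γ c + Multiset.map A (c : Finset (Fin n)).val) ∪
  (Set.range fun d : {d // d ∈ q.parts} =>
      Δ d + Multiset.map (fun i => dual (A i)) (d : Finset (Fin n)).val)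

lemma hypf_mem (v : V) : hypf dual A Γ Δ v ∈ hypSet dual A Γ Δ := by
  cases v with
  | inl c => exact Or.inl ⟨c, rfl⟩
  | inr d => exact Or.inr ⟨d, rfl⟩

def elemP (U : Finset V) : Finset (Fin n) :=
  Finset.univ.filter fun i => Sum.inl (pc p i) ∈ U

def elemQ (U : Finset V) : Finset (Fin n) :=
  Finset.univ.filter fun i => Sum.inr (qc q i) ∈ U

/-- The sequent associated to a set `U` of classes and a set `S` of already cut elements. -/
def DSeq (U : Finset V) (S : Finset (Fin n)) : Multiset F :=
  (∑ v ∈ U, base Γ Δ v) + Multiset.map A (elemP U \ S).val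
    + Multiset.map (fun i => dual (A i)) (elemQ U \ S).val

lemma DSeq_init_left (c : {c // c ∈ p.parts}) :
    DSeq dual A Γ Δ {Sum.inl c} ∅ = Γ c + Multiset.map A (c : Finset (Fin n)).val := by
  have h1 : elemP (p := p) (q := q) {Sum.inl c} = (c : Finset (Fin n)) := by
    ext j
    simp [elemP, mem_iff_pc]
  have h2 : elemQ (p := p) (q := q) {Sum.inl c} = (∅ : Finset (Fin n)) := by
    ext j
    simp [elemQ]
  simp [DSeq, h1, h2, base]

lemma DSeq_init_right (d : {d // d ∈ q.parts}) :
    DSeq dual A Γ Δ {Sum.inr d} ∅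
      = Δ d + Multiset.map (fun i => dual (A i)) (d : Finset (Fin n)).val := by
  have h1 : elemP (p := p) (q := q) {Sum.inr d} = (∅ : Finset (Fin n)) := by
    ext j
    simp [elemP]
  have h2 : elemQ (p := p) (q := q) {Sum.inr d} = (d : Finset (Fin n)) := by
    ext j
    simp [elemQ, mem_iff_qc]
  simp [DSeq, h1, h2, base]

lemma DSeq_univ :
    DSeq dual A Γ Δ Finset.univ Finset.univ
      = (∑ c : {c // c ∈ p.parts}, Γ c) + ∑ d : {d // d ∈ q.parts}, Δ d := by
  have h1 : elemP (p := p) (q := q) Finset.univ \ Finset.univ = (∅ : Finset (Fin n)) :=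
    Finset.sdiff_eq_empty_iff_subset.2 (Finset.subset_univ _)
  have h2 : elemQ (p := p) (q := q) Finset.univ \ Finset.univ = (∅ : Finset (Fin n)) :=
    Finset.sdiff_eq_empty_iff_subset.2 (Finset.subset_univ _)
  rw [DSeq, h1, h2]
  simp [Fintype.sum_sum_type, base]

end Glue

section Glue2

variable {F : Type} (dual : F → F) (A : Fin n → F)
  (Γ : {c // c ∈ p.parts} → Multiset F) (Δ : {d // d ∈ q.parts} → Multiset F)

local notation "V" => ({c // c ∈ p.parts} ⊕ {d // d ∈ q.parts})

lemma disjUnion_val' {α : Type*} (s t : Finset α) (h : Disjoint s t) :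
    (s.disjUnion t h).val = s.val + t.val := rfl

lemma exists_crossing {W : Type*} {G : SimpleGraph W} (U : Finset W) :
    ∀ {u w : W}, G.Walk u w → u ∈ U → w ∉ U → ∃ a ∈ U, ∃ b, b ∉ U ∧ G.Adj a b := by
  intro u w pw
  induction pw with
  | nil => intro h h'; exact absurd h h'
  | @cons x y z h pw ih =>
    intro hu hw
    by_cases hy : y ∈ U
    · exact ih hy hw
    · exact ⟨x, hu, y, hy, h⟩

set_option maxHeartbeats 1000000 in
lemma grow (hconn : (meetingGraph p q).Connected)
    (hcard : n + 1 = p.parts.card + q.parts.card) :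
    ∀ (m : ℕ) (U : Finset V) (S : Finset (Fin n)),
      (∀ i ∈ S, Sum.inl (pc p i) ∈ U ∧ Sum.inr (qc q i) ∈ U) →
      S.card + 1 = U.card →
      U.card + m = Fintype.card V →
      CutDeriv dual {B | ∃ i, B = A i} (hypSet dual A Γ Δ) (DSeq dual A Γ Δ U S) →
      CutDeriv dual {B | ∃ i, B = A i} (hypSet dual A Γ Δ)
        ((∑ c : {c // c ∈ p.parts}, Γ c) + ∑ d : {d // d ∈ q.parts}, Δ d) := by
  have hcardV : Fintype.card V = n + 1 := by
    rw [Fintype.card_sum, Fintype.card_coe, Fintype.card_coe]; omega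
  intro m
  induction m with
  | zero =>
    intro U S hint hSU hUm hD
    have hU : U = Finset.univ := Finset.eq_univ_of_card U (by omega)
    have hS : S = Finset.univ := Finset.eq_univ_of_card S (by simp only [Fintype.card_fin]; omega)
    rw [hU, hS, DSeq_univ] at hD
    exact hD
  | succ m ih =>
    intro U S hint hSU hUm hD
    have hUne : U.Nonempty := Finset.card_pos.1 (by omega)
    have hwex : ∃ w : V, w ∉ U := by
      by_contra hall
      push_neg at hall
      have : U = Finset.univ := Finset.eq_univ_iff_forall.2 hall
      rw [this, Finset.card_univ] at hUm
      omega
    obtain ⟨u, hu⟩ := hUne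
    obtain ⟨w, hw⟩ := hwex
    obtain ⟨pw⟩ := hconn.preconnected u w
    obtain ⟨a, ha, b, hb, hadj⟩ := exists_crossing U pw hu hw
    rw [meetingGraph, SimpleGraph.fromRel_adj] at hadj
    obtain ⟨hne, hrel⟩ := hadj
    rcases hrel with ⟨c, d, hcd, hac, hbd⟩ | ⟨c, d, hcd, hbc, had⟩
    · -- a = inl c ∈ U, b = inr d ∉ U
      subst hac; subst hbd
      obtain ⟨i, hi⟩ := hcd
      rw [Finset.mem_inter] at hi
      have hpci : pc p i = c := pc_eq hi.1
      have hqci : qc q i = d := qc_eq hi.2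
      have hiS : i ∉ S := fun h => hb (hqci ▸ (hint i h).2)
      have hiP : i ∈ elemP (p := p) (q := q) U \ S :=
        Finset.mem_sdiff.2 ⟨Finset.mem_filter.2 ⟨Finset.mem_univ _, hpci ▸ ha⟩, hiS⟩
      have hd1 : (elemP (p := p) (q := q) U \ S).val
          = i ::ₘ ((elemP (p := p) (q := q) U \ S).erase i).val := by
        rw [Finset.erase_val, Multiset.cons_erase (Finset.mem_def.1 hiP)]
      have hDeq : DSeq dual A Γ Δ U S
          = A i ::ₘ ((∑ v ∈ U, base Γ Δ v)
              + Multiset.map A ((elemP (p := p) (q := q) U \ S).erase i).val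
              + Multiset.map (fun j => dual (A j)) (elemQ (p := p) (q := q) U \ S).val) := by
        rw [DSeq, hd1, Multiset.map_cons, Multiset.add_cons, Multiset.cons_add]
      have hd2 : (d : Finset (Fin n)).val = i ::ₘ (d : Finset (Fin n)).val.erase i :=
        (Multiset.cons_erase (Finset.mem_def.1 hi.2)).symm
      have hHeq : hypf dual A Γ Δ (Sum.inr d)
          = dual (A i) ::ₘ (Δ d
              + Multiset.map (fun j => dual (A j)) ((d : Finset (Fin n)).val.erase i)) := by
        show Δ d + Multiset.map (fun j => dual (A j)) (d : Finset (Fin n)).val = _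
        conv_lhs => rw [hd2]
        rw [Multiset.map_cons, Multiset.add_cons]
      have hcut := CutDeriv.cut (A i) _ _ (show A i ∈ {B | ∃ i, B = A i} from ⟨i, rfl⟩) (hDeq ▸ hD)
        (hHeq ▸ CutDeriv.hyp _ (hypf_mem dual A Γ Δ (Sum.inr d)))
      -- identify the new sequent
      have e1 : ∑ v ∈ insert (Sum.inr d) U, base Γ Δ v = Δ d + ∑ v ∈ U, base Γ Δ v :=
        Finset.sum_insert hb
      have e2 : elemP (p := p) (q := q) (insert (Sum.inr d) U) = elemP (p := p) (q := q) U := by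
        ext j
        simp [elemP, Finset.mem_insert]
      have e3 : elemP (p := p) (q := q) U \ insert i S
          = (elemP (p := p) (q := q) U \ S).erase i := Finset.sdiff_insert _ _ _
      have k1 : ∀ j, j ∈ S → Sum.inr (qc q j) ∈ U := fun j h => (hint j h).2
      have k2 : ∀ j, qc q j = d → Sum.inr (qc q j) ∉ U := by
        intro j e he
        rw [e] at he
        exact hb he
      have e5 : Disjoint (elemQ (p := p) (q := q) U \ S) ((d : Finset (Fin n)).erase i) := by
        rw [Finset.disjoint_left]
        intro j hj hj'
        have h1 : Sum.inr (qc q j) ∈ U := (Finset.mem_filter.1 (Finset.mem_sdiff.1 hj).1).2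
        have h2 : qc q j = d := mem_iff_qc.1 (Finset.mem_of_mem_erase hj')
        exact k2 j h2 h1
      have e4 : elemQ (p := p) (q := q) (insert (Sum.inr d) U) \ insert i S
          = (elemQ (p := p) (q := q) U \ S).disjUnion ((d : Finset (Fin n)).erase i) e5 := by
        rw [Finset.disjUnion_eq_union]
        ext j
        have l1 : j ∈ S → Sum.inr (qc q j) ∈ U := k1 j
        have l2 : qc q j = d → Sum.inr (qc q j) ∉ U := k2 j
        have l3 : j = i → qc q j = d := fun e => e ▸ hqci
        simp only [elemQ, Finset.mem_sdiff, Finset.mem_filter, Finset.mem_univ, true_and,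
          Finset.mem_insert, Finset.mem_erase, Finset.mem_union, Sum.inr.injEq, mem_iff_qc]
        tauto
      have hDnew : DSeq dual A Γ Δ (insert (Sum.inr d) U) (insert i S)
          = ((∑ v ∈ U, base Γ Δ v)
              + Multiset.map A ((elemP (p := p) (q := q) U \ S).erase i).val
              + Multiset.map (fun j => dual (A j)) (elemQ (p := p) (q := q) U \ S).val)
            + (Δ d + Multiset.map (fun j => dual (A j)) ((d : Finset (Fin n)).val.erase i)) := by
        rw [DSeq, e1, e2, e3, e4, disjUnion_val', Multiset.map_add, Finset.erase_val]
        abel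
      refine ih (insert (Sum.inr d) U) (insert i S) ?_ ?_ ?_ ?_
      · intro j hj
        rcases Finset.mem_insert.1 hj with e | hj'
        · subst e
          exact ⟨Finset.mem_insert_of_mem (hpci ▸ ha), hqci ▸ Finset.mem_insert_self _ _⟩
        · exact ⟨Finset.mem_insert_of_mem (hint j hj').1, Finset.mem_insert_of_mem (hint j hj').2⟩
      · rw [Finset.card_insert_of_notMem hiS, Finset.card_insert_of_notMem hb]
        omega
      · rw [Finset.card_insert_of_notMem hb]
        omega
      · rw [hDnew]
        exact hcut
    · -- b = inl c ∉ U, a = inr d ∈ U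
      subst hbc; subst had
      obtain ⟨i, hi⟩ := hcd
      rw [Finset.mem_inter] at hi
      have hpci : pc p i = c := pc_eq hi.1
      have hqci : qc q i = d := qc_eq hi.2
      have hiS : i ∉ S := fun h => hb (hpci ▸ (hint i h).1)
      have hiQ : i ∈ elemQ (p := p) (q := q) U \ S :=
        Finset.mem_sdiff.2 ⟨Finset.mem_filter.2 ⟨Finset.mem_univ _, hqci ▸ ha⟩, hiS⟩
      have hd1 : (elemQ (p := p) (q := q) U \ S).val
          = i ::ₘ ((elemQ (p := p) (q := q) U \ S).erase i).val := by
        rw [Finset.erase_val, Multiset.cons_erase (Finset.mem_def.1 hiQ)]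
      have hDeq : DSeq dual A Γ Δ U S
          = dual (A i) ::ₘ ((∑ v ∈ U, base Γ Δ v)
              + Multiset.map A (elemP (p := p) (q := q) U \ S).val
              + Multiset.map (fun j => dual (A j)) ((elemQ (p := p) (q := q) U \ S).erase i).val) := by
        rw [DSeq, hd1, Multiset.map_cons, Multiset.add_cons]
      have hd2 : (c : Finset (Fin n)).val = i ::ₘ (c : Finset (Fin n)).val.erase i :=
        (Multiset.cons_erase (Finset.mem_def.1 hi.1)).symm
      have hHeq : hypf dual A Γ Δ (Sum.inl c)
          = A i ::ₘ (Γ c + Multiset.map A ((c : Finset (Fin n)).val.erase i)) := by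
        show Γ c + Multiset.map A (c : Finset (Fin n)).val = _
        conv_lhs => rw [hd2]
        rw [Multiset.map_cons, Multiset.add_cons]
      have hcut := CutDeriv.cut (A i) _ _ (show A i ∈ {B | ∃ i, B = A i} from ⟨i, rfl⟩)
        (hHeq ▸ CutDeriv.hyp _ (hypf_mem dual A Γ Δ (Sum.inl c))) (hDeq ▸ hD)
      have e1 : ∑ v ∈ insert (Sum.inl c) U, base Γ Δ v = Γ c + ∑ v ∈ U, base Γ Δ v :=
        Finset.sum_insert hb
      have e2 : elemQ (p := p) (q := q) (insert (Sum.inl c) U) = elemQ (p := p) (q := q) U := by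
        ext j
        simp [elemQ, Finset.mem_insert]
      have e3 : elemQ (p := p) (q := q) U \ insert i S
          = (elemQ (p := p) (q := q) U \ S).erase i := Finset.sdiff_insert _ _ _
      have k1 : ∀ j, j ∈ S → Sum.inl (pc p j) ∈ U := fun j h => (hint j h).1
      have k2 : ∀ j, pc p j = c → Sum.inl (pc p j) ∉ U := by
        intro j e he
        rw [e] at he
        exact hb he
      have e5 : Disjoint (elemP (p := p) (q := q) U \ S) ((c : Finset (Fin n)).erase i) := by
        rw [Finset.disjoint_left]
        intro j hj hj'
        have h1 : Sum.inl (pc p j) ∈ U := (Finset.mem_filter.1 (Finset.mem_sdiff.1 hj).1).2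
        have h2 : pc p j = c := mem_iff_pc.1 (Finset.mem_of_mem_erase hj')
        exact k2 j h2 h1
      have e4 : elemP (p := p) (q := q) (insert (Sum.inl c) U) \ insert i S
          = (elemP (p := p) (q := q) U \ S).disjUnion ((c : Finset (Fin n)).erase i) e5 := by
        rw [Finset.disjUnion_eq_union]
        ext j
        have l1 : j ∈ S → Sum.inl (pc p j) ∈ U := k1 j
        have l2 : pc p j = c → Sum.inl (pc p j) ∉ U := k2 j
        have l3 : j = i → pc p j = c := fun e => e ▸ hpci
        simp only [elemP, Finset.mem_sdiff, Finset.mem_filter, Finset.mem_univ, true_and,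
          Finset.mem_insert, Finset.mem_erase, Finset.mem_union, Sum.inl.injEq, mem_iff_pc]
        tauto
      have hDnew : DSeq dual A Γ Δ (insert (Sum.inl c) U) (insert i S)
          = (Γ c + Multiset.map A ((c : Finset (Fin n)).val.erase i))
            + ((∑ v ∈ U, base Γ Δ v)
              + Multiset.map A (elemP (p := p) (q := q) U \ S).val
              + Multiset.map (fun j => dual (A j)) ((elemQ (p := p) (q := q) U \ S).erase i).val) := by
        rw [DSeq, e1, e2, e3, e4, disjUnion_val', Multiset.map_add, Finset.erase_val]
        abel
      refine ih (insert (Sum.inl c) U) (insert i S) ?_ ?_ ?_ ?_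
      · intro j hj
        rcases Finset.mem_insert.1 hj with e | hj'
        · subst e
          exact ⟨hpci ▸ Finset.mem_insert_self _ _, Finset.mem_insert_of_mem (hqci ▸ ha)⟩
        · exact ⟨Finset.mem_insert_of_mem (hint j hj').1, Finset.mem_insert_of_mem (hint j hj').2⟩
      · rw [Finset.card_insert_of_notMem hiS, Finset.card_insert_of_notMem hb]
        omega
      · rw [Finset.card_insert_of_notMem hb]
        omega
      · rw [hDnew]
        exact hcut

lemma glue (horth : p.Orthogonal q) :
    CutDeriv dual {B | ∃ i, B = A i} (hypSet dual A Γ Δ)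
      ((∑ c : {c // c ∈ p.parts}, Γ c) + ∑ d : {d // d ∈ q.parts}, Δ d) := by
  obtain ⟨hconn, hcard⟩ := horth
  have hne : Nonempty V := hconn.nonempty
  have hpos : 0 < Fintype.card V := Fintype.card_pos
  obtain v₀ := hne.some
  cases v₀ with
  | inl c =>
    refine grow dual A Γ Δ hconn hcard (Fintype.card V - 1) {Sum.inl c} ∅ (by simp) (by simp)
      (by simp; omega) ?_
    rw [DSeq_init_left]
    exact CutDeriv.hyp _ (Or.inl ⟨c, rfl⟩)
  | inr d =>
    refine grow dual A Γ Δ hconn hcard (Fintype.card V - 1) {Sum.inr d} ∅ (by simp) (by simp)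
      (by simp; omega) ?_
    rw [DSeq_init_right]
    exact CutDeriv.hyp _ (Or.inr ⟨d, rfl⟩)

end Glue2

section Converse

abbrev F0 : Type := Formula Empty (fun e => e.elim)

def A0 {n : ℕ} : Fin n → F0 := fun i => Formula.pos i.val

lemma A0_inj : Function.Injective (A0 (n := n)) := by
  intro i j h
  simp only [A0, Formula.pos.injEq] at h
  exact Fin.ext h

noncomputable def markF (p : NPartition n) (q : NPartition n)
    (v : {c // c ∈ p.parts} ⊕ {d // d ∈ q.parts}) : F0 :=
  Formula.pos (n + (Fintype.equivFin _ v).val)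

lemma markF_inj : Function.Injective (markF p q) := by
  intro v w h
  simp only [markF, Formula.pos.injEq, Nat.add_right_inj] at h
  exact (Fintype.equivFin _).injective (Fin.ext h)

noncomputable def Γ0 (p q : NPartition n) : {c // c ∈ p.parts} → Multiset F0 :=
  fun c => {markF p q (Sum.inl c)}

noncomputable def Δ0 (p q : NPartition n) : {d // d ∈ q.parts} → Multiset F0 :=
  fun d => {markF p q (Sum.inr d)}

lemma mem_hypf_pos {i : Fin n} {w : {c // c ∈ p.parts} ⊕ {d // d ∈ q.parts}}
    (h : Formula.pos i.val ∈ hypf Formula.dual A0 (Γ0 p q) (Δ0 p q) w) :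
    w = Sum.inl (pc p i) := by
  cases w with
  | inl c =>
    simp only [hypf, Sum.elim_inl, Γ0, Multiset.mem_add, Multiset.mem_singleton] at h
    rcases h with h | h
    · exfalso
      have hlt := i.isLt
      simp only [markF, Formula.pos.injEq] at h
      omega
    · obtain ⟨j, hj, e⟩ := Multiset.mem_map.1 h
      have hji : j = i := A0_inj (show A0 j = A0 i from e)
      subst hji
      exact congrArg Sum.inl (pc_eq (Finset.mem_def.2 hj)).symm
  | inr d =>
    exfalso
    simp only [hypf, Sum.elim_inr, Δ0, Multiset.mem_add, Multiset.mem_singleton] at h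
    rcases h with h | h
    · have hlt := i.isLt
      simp only [markF, Formula.pos.injEq] at h
      omega
    · obtain ⟨j, hj, e⟩ := Multiset.mem_map.1 h
      simp [A0, Formula.dual] at e

lemma mem_hypf_neg {i : Fin n} {w : {c // c ∈ p.parts} ⊕ {d // d ∈ q.parts}}
    (h : Formula.neg i.val ∈ hypf Formula.dual A0 (Γ0 p q) (Δ0 p q) w) :
    w = Sum.inr (qc q i) := by
  cases w with
  | inl c =>
    exfalso
    simp only [hypf, Sum.elim_inl, Γ0, Multiset.mem_add, Multiset.mem_singleton] at h
    rcases h with h | h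
    · simp [markF] at h
    · obtain ⟨j, hj, e⟩ := Multiset.mem_map.1 h
      simp [A0] at e
  | inr d =>
    simp only [hypf, Sum.elim_inr, Δ0, Multiset.mem_add, Multiset.mem_singleton] at h
    rcases h with h | h
    · exfalso
      simp [markF] at h
    · obtain ⟨j, hj, e⟩ := Multiset.mem_map.1 h
      have e' : (Formula.neg j.val : F0) = Formula.neg i.val := by
        rw [← e]; rfl
      simp only [Formula.neg.injEq] at e'
      have hji : j = i := Fin.ext e'
      subst hji
      exact congrArg Sum.inr (qc_eq (Finset.mem_def.2 hj)).symm

lemma invariant {S : Multiset F0}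
    (hD : CutDeriv Formula.dual {B | ∃ i : Fin n, B = A0 i}
        (hypSet Formula.dual A0 (Γ0 p q) (Δ0 p q)) S) :
    ∃ (L : Multiset ({c // c ∈ p.parts} ⊕ {d // d ∈ q.parts})) (E : Multiset (Fin n)),
      Multiset.card L = Multiset.card E + 1 ∧
      L.bind (hypf Formula.dual A0 (Γ0 p q) (Δ0 p q))
        = S + E.map A0 + E.map (fun i => Formula.dual (A0 i)) ∧
      ∀ v ∈ L, ∀ w ∈ L, (meetingGraph p q).Reachable v w := by
  induction hD with
  | hyp Γ' hΓ' =>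
    have : ∃ v, Γ' = hypf Formula.dual A0 (Γ0 p q) (Δ0 p q) v := by
      rcases hΓ' with ⟨c, hc⟩ | ⟨d, hd⟩
      · exact ⟨Sum.inl c, hc.symm⟩
      · exact ⟨Sum.inr d, hd.symm⟩
    obtain ⟨v, rfl⟩ := this
    refine ⟨{v}, 0, by simp, by simp, ?_⟩
    intro a ha b hb
    rw [Multiset.mem_singleton] at ha hb
    subst ha; subst hb
    exact SimpleGraph.Reachable.refl _
  | cut B Γ' Δ' hB h1 h2 ih1 ih2 =>
    obtain ⟨i, rfl⟩ := hB
    obtain ⟨L₁, E₁, hc1, he1, hr1⟩ := ih1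
    obtain ⟨L₂, E₂, hc2, he2, hr2⟩ := ih2
    have hm1 : Sum.inl (pc p i) ∈ L₁ := by
      have hmem : A0 i ∈ L₁.bind (hypf Formula.dual A0 (Γ0 p q) (Δ0 p q)) := by
        rw [he1]
        exact Multiset.mem_add.2 (Or.inl (Multiset.mem_add.2 (Or.inl (Multiset.mem_cons_self _ _))))
      obtain ⟨w, hw, hmemw⟩ := Multiset.mem_bind.1 hmem
      rwa [mem_hypf_pos hmemw] at hw
    have hm2 : Sum.inr (qc q i) ∈ L₂ := by
      have hmem : Formula.neg i.val ∈ L₂.bind (hypf Formula.dual A0 (Γ0 p q) (Δ0 p q)) := by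
        rw [he2]
        exact Multiset.mem_add.2 (Or.inl (Multiset.mem_add.2 (Or.inl (Multiset.mem_cons_self _ _))))
      obtain ⟨w, hw, hmemw⟩ := Multiset.mem_bind.1 hmem
      rwa [mem_hypf_neg hmemw] at hw
    refine ⟨L₁ + L₂, i ::ₘ (E₁ + E₂), by simp; omega, ?_, ?_⟩
    · rw [Multiset.add_bind, he1, he2]
      simp only [Multiset.map_cons, Multiset.map_add, Multiset.map_singleton,
        ← Multiset.singleton_add]
      abel
    · intro v hv w hw
      have key : ∀ v ∈ L₁, ∀ w ∈ L₂, (meetingGraph p q).Reachable v w := by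
        intro v hv w hw
        exact ((hr1 v hv _ hm1).trans (adj_pc_qc i).reachable).trans (hr2 _ hm2 w hw)
      rcases Multiset.mem_add.1 hv with hv' | hv' <;> rcases Multiset.mem_add.1 hw with hw' | hw'
      · exact hr1 v hv' w hw'
      · exact key v hv' w hw'
      · exact (key w hw' v hv').symm
      · exact hr2 v hv' w hw'

lemma sum_map_ite {α : Type*} [DecidableEq α] (v : α) :
    ∀ (L : Multiset α), (L.map fun w => if w = v then 1 else 0).sum = L.count v := by
  intro L
  induction L using Multiset.induction_on with
  | empty => simp
  | cons a s ih =>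
    rw [Multiset.map_cons, Multiset.sum_cons, ih, Multiset.count_cons]
    by_cases h : a = v
    · subst h
      simp [Nat.add_comm]
    · rw [if_neg h, if_neg (fun e => h e.symm)]
      omega

lemma map_val_eq_sum {α β : Type*} (s : Finset α) (f : α → β) :
    Multiset.map f s.val = ∑ a ∈ s, ({f a} : Multiset β) := by
  induction s using Finset.cons_induction with
  | empty => simp
  | cons a s ha ih => rw [Finset.sum_cons, ← ih]; simp

lemma count_mark_hypf [DecidableEq F0] (v w : {c // c ∈ p.parts} ⊕ {d // d ∈ q.parts}) :
    Multiset.count (markF p q v) (hypf Formula.dual A0 (Γ0 p q) (Δ0 p q) w)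
      = if w = v then 1 else 0 := by
  have hiff : ∀ u : {c // c ∈ p.parts} ⊕ {d // d ∈ q.parts},
      (markF p q v = markF p q u) ↔ (u = v) :=
    fun u => ⟨fun e => (markF_inj e).symm, fun e => by rw [e]⟩
  have hnotinP : ∀ (c : Finset (Fin n)),
      markF p q v ∉ Multiset.map (A0 (n := n)) c.val := by
    intro c h
    obtain ⟨j, hj, e⟩ := Multiset.mem_map.1 h
    have := j.isLt
    simp only [A0, markF, Formula.pos.injEq] at e
    omega
  have hnotinQ : ∀ (d : Finset (Fin n)),
      markF p q v ∉ Multiset.map (fun i => Formula.dual (A0 (n := n) i)) d.val := by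
    intro d h
    obtain ⟨j, hj, e⟩ := Multiset.mem_map.1 h
    exact absurd e (by simp [A0, markF, Formula.dual])
  cases w with
  | inl c =>
    show Multiset.count _ (Γ0 p q c + Multiset.map A0 (c : Finset (Fin n)).val) = _
    rw [Multiset.count_add, Multiset.count_eq_zero.2 (hnotinP _), add_zero, Γ0,
      Multiset.count_singleton, if_congr (hiff _) rfl rfl]
  | inr d =>
    show Multiset.count _ (Δ0 p q d
        + Multiset.map (fun i => Formula.dual (A0 i)) (d : Finset (Fin n)).val) = _
    rw [Multiset.count_add, Multiset.count_eq_zero.2 (hnotinQ _), add_zero, Δ0,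
      Multiset.count_singleton, if_congr (hiff _) rfl rfl]

lemma count_pos_hypf [DecidableEq F0] (i : Fin n)
    (w : {c // c ∈ p.parts} ⊕ {d // d ∈ q.parts}) :
    Multiset.count (Formula.pos i.val) (hypf Formula.dual A0 (Γ0 p q) (Δ0 p q) w)
      = if w = Sum.inl (pc p i) then 1 else 0 := by
  cases w with
  | inl c =>
    show Multiset.count _ (Γ0 p q c + Multiset.map A0 (c : Finset (Fin n)).val) = _
    have h1 : Multiset.count (Formula.pos i.val : F0) (Γ0 p q c) = 0 := by
      rw [Multiset.count_eq_zero]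
      intro h
      rw [Γ0, Multiset.mem_singleton] at h
      have := i.isLt
      simp only [markF, Formula.pos.injEq] at h
      omega
    have h2 : Multiset.count (Formula.pos i.val : F0)
        (Multiset.map A0 (c : Finset (Fin n)).val) = Multiset.count i (c : Finset (Fin n)).val :=
      Multiset.count_map_eq_count' _ _ A0_inj i
    rw [Multiset.count_add, h1, h2, zero_add]
    by_cases hm : i ∈ (c : Finset (Fin n))
    · rw [Multiset.count_eq_one_of_mem (c : Finset (Fin n)).nodup (Finset.mem_def.1 hm),
        if_pos (by rw [pc_eq hm])]
    · rw [Multiset.count_eq_zero_of_notMem (fun hh => hm (Finset.mem_def.2 hh)), if_neg]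
      intro e
      rw [Sum.inl.injEq] at e
      exact hm (e ▸ mem_pc i)
  | inr d =>
    show Multiset.count _ (Δ0 p q d
        + Multiset.map (fun i => Formula.dual (A0 i)) (d : Finset (Fin n)).val) = _
    have h1 : Multiset.count (Formula.pos i.val : F0) (Δ0 p q d) = 0 := by
      rw [Multiset.count_eq_zero]
      intro h
      rw [Δ0, Multiset.mem_singleton] at h
      have := i.isLt
      simp only [markF, Formula.pos.injEq] at h
      omega
    have h2 : Multiset.count (Formula.pos i.val : F0)
        (Multiset.map (fun i => Formula.dual (A0 i)) (d : Finset (Fin n)).val) = 0 := by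
      rw [Multiset.count_eq_zero]
      intro h
      obtain ⟨j, hj, e⟩ := Multiset.mem_map.1 h
      exact absurd e (by simp [A0, Formula.dual])
    rw [Multiset.count_add, h1, h2]
    simp

lemma converse
    (hD : CutDeriv Formula.dual {B | ∃ i : Fin n, B = A0 i}
        (hypSet Formula.dual A0 (Γ0 p q) (Δ0 p q))
        ((∑ c : {c // c ∈ p.parts}, Γ0 p q c) + ∑ d : {d // d ∈ q.parts}, Δ0 p q d)) :
    p.Orthogonal q := by
  classical
  obtain ⟨L, E, hc, he, hr⟩ := invariant hD
  have hC0 : (∑ c : {c // c ∈ p.parts}, Γ0 p q c) + ∑ d : {d // d ∈ q.parts}, Δ0 p q d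
      = Multiset.map (markF p q)
          (Finset.univ.val : Multiset ({c // c ∈ p.parts} ⊕ {d // d ∈ q.parts})) := by
    rw [map_val_eq_sum, Fintype.sum_sum_type]
    rfl
  rw [hC0] at he
  have hnotmarkA : ∀ v, markF p q v ∉ E.map (A0 (n := n)) := by
    intro v h
    obtain ⟨j, hj, e⟩ := Multiset.mem_map.1 h
    have := j.isLt
    simp only [A0, markF, Formula.pos.injEq] at e
    omega
  have hnotmarkD : ∀ v, markF p q v ∉ E.map (fun i => Formula.dual (A0 (n := n) i)) := by
    intro v h
    obtain ⟨j, hj, e⟩ := Multiset.mem_map.1 h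
    exact absurd e (by simp [A0, markF, Formula.dual])
  have hLv : ∀ v, L.count v = 1 := by
    intro v
    have h := congrArg (Multiset.count (markF p q v)) he
    rw [Multiset.count_bind,
      Multiset.map_congr rfl (fun w _ => count_mark_hypf v w), sum_map_ite,
      Multiset.count_add, Multiset.count_add,
      Multiset.count_eq_zero.2 (hnotmarkA v), Multiset.count_eq_zero.2 (hnotmarkD v),
      Multiset.count_map_eq_count' _ _ markF_inj,
      Multiset.count_eq_one_of_mem Finset.univ.nodup
        (Finset.mem_def.1 (Finset.mem_univ v))] at h
    simpa using h
  have hEi : ∀ i : Fin n, E.count i = 1 := by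
    intro i
    have h := congrArg (Multiset.count (Formula.pos i.val : F0)) he
    have hposmark : Multiset.count (Formula.pos i.val : F0)
        (Multiset.map (markF p q) (Finset.univ.val :
          Multiset ({c // c ∈ p.parts} ⊕ {d // d ∈ q.parts}))) = 0 := by
      rw [Multiset.count_eq_zero]
      intro hmem
      obtain ⟨w, hw, e⟩ := Multiset.mem_map.1 hmem
      have := i.isLt
      simp only [markF, Formula.pos.injEq] at e
      omega
    have hposdual : Multiset.count (Formula.pos i.val : F0)
        (E.map (fun i => Formula.dual (A0 (n := n) i))) = 0 := by
      rw [Multiset.count_eq_zero]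
      intro hmem
      obtain ⟨j, hj, e⟩ := Multiset.mem_map.1 hmem
      exact absurd e (by simp [A0, Formula.dual])
    have hposA : Multiset.count (Formula.pos i.val : F0) (E.map (A0 (n := n)))
        = E.count i := Multiset.count_map_eq_count' _ _ A0_inj i
    rw [Multiset.count_bind,
      Multiset.map_congr rfl (fun w _ => count_pos_hypf i w), sum_map_ite,
      Multiset.count_add, Multiset.count_add, hposmark, hposA, hposdual, hLv] at h
    omega
  have hL : L = (Finset.univ.val : Multiset ({c // c ∈ p.parts} ⊕ {d // d ∈ q.parts})) := by
    ext v
    rw [hLv v, Multiset.count_eq_one_of_mem Finset.univ.nodup (Finset.mem_def.1 (Finset.mem_univ v))]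
  have hE : E = (Finset.univ.val : Multiset (Fin n)) := by
    ext i
    rw [hEi i, Multiset.count_eq_one_of_mem Finset.univ.nodup (Finset.mem_def.1 (Finset.mem_univ i))]
  have hcardL : Multiset.card L
      = Fintype.card ({c // c ∈ p.parts} ⊕ {d // d ∈ q.parts}) := by
    rw [hL, ← Finset.card_def, Finset.card_univ]
  have hcardE : Multiset.card E = n := by
    rw [hE, ← Finset.card_def, Finset.card_univ, Fintype.card_fin]
  have hcardV : Fintype.card ({c // c ∈ p.parts} ⊕ {d // d ∈ q.parts})
      = p.parts.card + q.parts.card := by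
    rw [Fintype.card_sum, Fintype.card_coe, Fintype.card_coe]
  constructor
  · obtain ⟨v0, _⟩ := Multiset.card_pos_iff_exists_mem.1 (by omega : 0 < Multiset.card L)
    rw [SimpleGraph.connected_iff]
    refine ⟨?_, ⟨v0⟩⟩
    intro v w
    exact hr v (hL ▸ Finset.mem_def.1 (Finset.mem_univ v))
      w (hL ▸ Finset.mem_def.1 (Finset.mem_univ w))
  · omega

end Converse
end DR

/-- **Danos–Regnier's Lemma 1 (main cut-elimination step iff orthogonality).**
For any `n`-ary connectives `C₁` and `C₂` given by partition sets `P₁` and `P₂` of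
`{1,…,n}`, the main cut-elimination step holds for every cut between the conclusion
`C₁(A₁,…,Aₙ)` of any introduction rule `p ∈ P₁` (with premises `⊢ Γ_c, A_{c₁},…,A_{cₘ}`
for the classes `c` of `p`) and the conclusion `C₂(~A₁,…,~Aₙ)` of any introduction rule
`q ∈ P₂` (with premises `⊢ Δ_d, ~A_{d₁},…,~A_{dₘ}` for the classes `d` of `q`) — that is,
such a cut can always be replaced by cuts on the pairs `Aᵢ, ~Aᵢ` yielding a derivation of
the same end-sequent `⊢ Γ₁,…,Γ_k, Δ₁,…,Δ_l` from the same premises — if and only if the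
partition sets `P₁` and `P₂` are orthogonal. -/
theorem main_cut_step_iff_orthogonal {n : ℕ} (P₁ P₂ : Set (NPartition n)) :
    (∀ (I : Type) (Csig : I → GenConn) (A : Fin n → Formula I Csig),
      ∀ p ∈ P₁, ∀ q ∈ P₂,
      ∀ (Γ : {c // c ∈ p.parts} → Multiset (Formula I Csig))
        (Δ : {d // d ∈ q.parts} → Multiset (Formula I Csig)),
        CutDeriv Formula.dual {B | ∃ i, B = A i}
          ((Set.range fun c : {c // c ∈ p.parts} =>
              Γ c + Multiset.map A (c : Finset (Fin n)).val) ∪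
           (Set.range fun d : {d // d ∈ q.parts} =>
              Δ d + Multiset.map (fun i => (A i).dual) (d : Finset (Fin n)).val))
          ((∑ c : {c // c ∈ p.parts}, Γ c) + ∑ d : {d // d ∈ q.parts}, Δ d)) ↔
    orthSet P₁ P₂ := by
  constructor
  · intro h p hp q hq
    exact DR.converse (h Empty (fun e => e.elim) DR.A0 p hp q hq (DR.Γ0 p q) (DR.Δ0 p q))
  · intro h I Csig A p hp q hq Γ Δ
    exact DR.glue Formula.dual A Γ Δ (h p hp q hq)
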